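/- Let (Γ, Δ) be a pair of simple graphs on a common finite vertex set V with no common edges, admitting a common bipartition ε : V → {0,1} (every edge of Γ and every edge of Δ joins vertices with different values of ε), whose adjacency matrices commute, and such that every connected component of Γ and every connected component of Δ is an ADE Dynkin diagram. Then there exist maps c_Γ, c_Δ : V → {0,1} such that for every edge {u,v} of Γ one has c_Γ(u) ≠ c_Γ(v) and c_Δ(u) = c_Δ(v), and for every edge {u,v} of Δ one has c_Γ(u) = c_Γ(v) and c_Δ(u) ≠ c_Δ(v). -/

import Mathlib

open scoped BigOperators

/-- The Dynkin diagram `A_n`: vertices `0, …, n-1` with edges `{i, i+1}`. -/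
def adeA (n : ℕ) : SimpleGraph (Fin n) :=
  SimpleGraph.fromRel (fun i j => (i : ℕ) + 1 = (j : ℕ))

/-- The Dynkin diagram `D_n` (`n ≥ 4`): a path on vertices `0, …, n-2`
together with the edge `{n-3, n-1}`. -/
def adeD (n : ℕ) : SimpleGraph (Fin n) :=
  SimpleGraph.fromRel (fun i j =>
    ((i : ℕ) + 1 = (j : ℕ) ∧ (j : ℕ) ≤ n - 2) ∨ ((i : ℕ) = n - 3 ∧ (j : ℕ) = n - 1))

/-- The Dynkin diagram `E_n` (`n = 6, 7, 8`): a path on vertices `0, …, n-2`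
together with the edge `{2, n-1}`. -/
def adeE (n : ℕ) : SimpleGraph (Fin n) :=
  SimpleGraph.fromRel (fun i j =>
    ((i : ℕ) + 1 = (j : ℕ) ∧ (j : ℕ) ≤ n - 2) ∨ ((i : ℕ) = 2 ∧ (j : ℕ) = n - 1))

/-- A graph is an ADE Dynkin diagram if it is isomorphic to some `A_n` (`n ≥ 1`),
`D_n` (`n ≥ 4`), or `E_n` (`n = 6, 7, 8`). -/
def IsADE {W : Type*} (G : SimpleGraph W) : Prop :=
  (∃ n : ℕ, 1 ≤ n ∧ Nonempty (G ≃g adeA n)) ∨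
  (∃ n : ℕ, 4 ≤ n ∧ Nonempty (G ≃g adeD n)) ∨
  (∃ n : ℕ, (n = 6 ∨ n = 7 ∨ n = 8) ∧ Nonempty (G ≃g adeE n))


namespace ADE
open SimpleGraph

variable {V : Type*} {G : SimpleGraph V}

/-- Take the first `n` edges of a walk. -/
def wtake : ∀ {u v : V} (p : G.Walk u v) (n : ℕ), G.Walk u (p.getVert n)
  | _, _, p, 0 => (Walk.nil.copy rfl (p.getVert_zero).symm)
  | _, _, Walk.nil, _+1 => Walk.nil
  | _, _, Walk.cons h q, n+1 => Walk.cons h (wtake q n)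

/-- Drop the first `n` edges of a walk. -/
def wdrop : ∀ {u v : V} (p : G.Walk u v) (n : ℕ), G.Walk (p.getVert n) v
  | _, _, p, 0 => p.copy (p.getVert_zero).symm rfl
  | _, _, Walk.nil, _+1 => Walk.nil
  | _, _, Walk.cons _ q, n+1 => wdrop q n

@[simp] lemma length_wtake : ∀ {u v : V} (p : G.Walk u v) (n : ℕ),
    (wtake p n).length = min n p.length
  | _, _, p, 0 => by simp [wtake]
  | _, _, Walk.nil, n+1 => by simp [wtake]
  | _, _, Walk.cons h q, n+1 => by
      simp only [wtake, Walk.length_cons, length_wtake q n, Nat.min_def]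
      split <;> (change (wtake q n).length + 1 = _; rw [length_wtake q n]; omega)

@[simp] lemma length_wdrop : ∀ {u v : V} (p : G.Walk u v) (n : ℕ),
    (wdrop p n).length = p.length - n
  | _, _, p, 0 => by simp [wdrop]
  | _, _, Walk.nil, n+1 => by simp [wdrop]
  | _, _, Walk.cons h q, n+1 => by simp [wdrop, length_wdrop q n]

@[simp] lemma getVert_wdrop : ∀ {u v : V} (p : G.Walk u v) (n k : ℕ),
    (wdrop p n).getVert k = p.getVert (n + k)
  | _, _, p, 0, k => by simp [wdrop]
  | _, _, Walk.nil, n+1, k => by simp [wdrop, Walk.getVert]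
  | _, _, Walk.cons h q, n+1, k => by
      show (wdrop q n).getVert k = (Walk.cons h q).getVert (n + 1 + k)
      rw [show n + 1 + k = (n + k) + 1 by omega, Walk.getVert_cons_succ]
      exact getVert_wdrop q n k

@[simp] lemma support_wtake : ∀ {u v : V} (p : G.Walk u v) (n : ℕ),
    (wtake p n).support = p.support.take (n+1)
  | _, _, p, 0 => by
      simp [wtake]
      cases p <;> simp
  | _, _, Walk.nil, n+1 => by simp [wtake]
  | _, _, Walk.cons h q, n+1 => by
      simp [wtake, support_wtake q n]

lemma isPath_wtake {u v : V} {p : G.Walk u v} (hp : p.IsPath) (n : ℕ) :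
    (wtake p n).IsPath := by
  rw [Walk.isPath_def] at hp ⊢
  rw [support_wtake]
  exact hp.sublist (List.take_sublist _ _)


lemma support_eq_map_getVert : ∀ {u v : V} (p : G.Walk u v),
    p.support = (List.range (p.length + 1)).map p.getVert
  | _, _, Walk.nil => by simp [Walk.getVert]
  | _, _, Walk.cons h q => by
      rw [Walk.support_cons, support_eq_map_getVert q, Walk.length_cons,
        List.range_succ_eq_map (n := q.length + 1), List.map_cons, List.map_map]
      rfl

/-- In a cycle, `getVert` is injective on indices `1, …, length`. -/
lemma cycle_getVert_inj {v : V} {c : G.Walk v v} (hc : c.IsCycle) {i j : ℕ}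
    (hi1 : 1 ≤ i) (hi2 : i ≤ c.length) (hj1 : 1 ≤ j) (hj2 : j ≤ c.length)
    (h : c.getVert i = c.getVert j) : i = j := by
  have hnd : c.support.tail.Nodup := hc.2
  rw [support_eq_map_getVert c, List.range_succ_eq_map, List.map_cons, List.tail_cons,
    List.map_map] at hnd
  have := List.inj_on_of_nodup_map hnd (x := i - 1) (y := j - 1) (by
      rw [List.mem_range]; omega) (by rw [List.mem_range]; omega) (by
      simp only [Function.comp_apply, Nat.succ_eq_add_one]
      rw [Nat.sub_add_cancel hi1, Nat.sub_add_cancel hj1]; exact h)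
  omega

/-- If every vertex has at most one neighbor smaller than itself (w.r.t. a linear
order), the graph is acyclic. -/
lemma acyclic_of_unique_smaller [LinearOrder V]
    (hsn : ∀ u₁ u₂ w : V, G.Adj u₁ w → G.Adj u₂ w → u₁ < w → u₂ < w → u₁ = u₂) :
    G.IsAcyclic := by
  intro v c hc
  have hL := hc.three_le_length
  -- maximum over positions 1..length
  obtain ⟨p, hp1, hpL, hpmax⟩ : ∃ p, 1 ≤ p ∧ p ≤ c.length ∧
      ∀ k, 1 ≤ k → k ≤ c.length → c.getVert k ≤ c.getVert p := by
    obtain ⟨p, hpmem, hpmax⟩ := Finset.exists_max_image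
      (Finset.Icc 1 c.length) c.getVert ⟨1, by simp; omega⟩
    rw [Finset.mem_Icc] at hpmem
    exact ⟨p, hpmem.1, hpmem.2, fun k h1 h2 => hpmax k (Finset.mem_Icc.mpr ⟨h1, h2⟩)⟩
  set m := c.getVert p with hm
  -- two neighbors of m
  have hadj1 : G.Adj (c.getVert (p-1)) m := by
    have := c.adj_getVert_succ (i := p - 1) (by omega)
    rwa [Nat.sub_add_cancel hp1] at this
  obtain ⟨q, hq1, hqL, hadj2, hne⟩ : ∃ q, 1 ≤ q ∧ q ≤ c.length ∧
      G.Adj (c.getVert q) m ∧ c.getVert q ≠ c.getVert (p-1) := by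
    by_cases hpL' : p = c.length
    · refine ⟨1, le_refl _, by omega, ?_, ?_⟩
      · have := c.adj_getVert_succ (i := 0) (by omega)
        rw [Walk.getVert_zero] at this
        rw [hm, hpL', Walk.getVert_length]
        exact this.symm
      · intro h
        have : (1 : ℕ) = p - 1 := cycle_getVert_inj hc (by omega) (by omega) (by omega) (by omega) h
        omega
    · refine ⟨p+1, by omega, by omega, (c.adj_getVert_succ (by omega)).symm, ?_⟩
      intro h
      by_cases hp1' : p = 1
      · have h2 : c.getVert (p+1) = c.getVert c.length := by
          rw [h, hp1']; simp
        have : p + 1 = c.length := cycle_getVert_inj hc (by omega) (by omega) (by omega) (by omega) h2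
        omega
      · have : p + 1 = p - 1 := cycle_getVert_inj hc (by omega) (by omega) (by omega) (by omega) h
        omega
  -- both are smaller than m
  have h1 : c.getVert (p-1) < m := lt_of_le_of_ne (by
      by_cases h : p - 1 = 0
      · rw [h, Walk.getVert_zero, show v = c.getVert c.length by simp]
        exact hpmax _ (by omega) (le_refl _)
      · exact hpmax _ (by omega) (by omega)) (fun h => hadj1.ne h)
  have h2 : c.getVert q < m := lt_of_le_of_ne (hpmax _ hq1 hqL) (fun h => hadj2.ne h)
  exact hne (hsn _ _ _ hadj2 hadj1 h2 h1)


lemma getVert_wtake : ∀ {u v : V} (p : G.Walk u v) {n i : ℕ}, i ≤ n →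
    (wtake p n).getVert i = p.getVert i
  | _, _, p, 0, i, hi => by
      interval_cases i
      simp [wtake]
  | _, _, Walk.nil, n+1, i, hi => by simp [wtake, Walk.getVert]
  | _, _, Walk.cons h q, n+1, 0, hi => by exact Walk.getVert_zero _
  | _, _, Walk.cons h q, n+1, i+1, hi => by
      simp only [wtake, Walk.getVert_cons_succ]
      exact getVert_wtake q (by omega)

/-- The first edge of a path is the only edge containing its first vertex. -/
lemma eq_getVert_one_of_mem_edges : ∀ {a b : V} (p : G.Walk a b) (_ : p.IsPath) (w : V),
    s(w, a) ∈ p.edges → w = p.getVert 1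
  | _, _, Walk.nil, _, w, hmem => by simp at hmem
  | _, _, @Walk.cons _ _ a m b h q, hp, w, hmem => by
      rw [Walk.edges_cons, List.mem_cons] at hmem
      rcases hmem with hmem | hmem
      · rw [Sym2.eq_iff] at hmem
        rcases hmem with ⟨h1, h2⟩ | ⟨h1, h2⟩
        · exact absurd h2 h.ne
        · rw [show (1:ℕ) = 0 + 1 from rfl, Walk.getVert_cons_succ, Walk.getVert_zero]; exact h1
      · exfalso
        have ha : a ∈ q.support := Walk.snd_mem_support_of_mem_edges q hmem
        rw [Walk.cons_isPath_iff] at hp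
        exact hp.2 ha

/-- Transport an `X`-walk across a `Y`-edge using commutation. -/

lemma transport {V : Type*} {X Y : SimpleGraph V}
    (swap : ∀ a b : V, (∃ w, X.Adj a w ∧ Y.Adj w b) → ∃ w, Y.Adj a w ∧ X.Adj w b) :
    ∀ {a b b' : V} (p : X.Walk a b), Y.Adj b b' →
      ∃ a', Y.Adj a a' ∧ ∃ p' : X.Walk a' b', p'.length = p.length := by
  intro a b b' p
  induction p generalizing b' with
  | nil => exact fun h => ⟨b', h, Walk.nil, rfl⟩
  | cons h q ih =>
      intro hbb'
      obtain ⟨m', hm', q', hq'⟩ := ih hbb'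
      obtain ⟨a', ha', ham'⟩ := swap _ _ ⟨_, h, hm'⟩
      exact ⟨a', ha', Walk.cons ham' q', by simp [hq']⟩
/-- The leaf-chasing argument in the acyclic graph `Y`. -/
lemma chase [Fintype V] {X Y : SimpleGraph V} (hYac : Y.IsAcyclic)
    (swap : ∀ a b : V, (∃ w, X.Adj a w ∧ Y.Adj w b) → ∃ w, Y.Adj a w ∧ X.Adj w b)
    (g h : ℕ) (hh3 : 3 ≤ h) (hhodd : Odd h)
    (ih : ∀ h', Odd h' → h' < h → ∀ a b : V, (∃ p : X.Walk a b, p.length = g) →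
      (∃ q : Y.Walk a b, q.length = h') → False) :
    ∀ k, ∀ a c : V, ∀ R : Y.Walk a c, Fintype.card V - R.length = k → R.IsPath →
      h ≤ R.length → (∃ p : X.Walk a (R.getVert h), p.length = g) → False := by
  intro k
  induction k using Nat.strong_induction_on with
  | _ k IH =>
  intro a c R hk hpath hhle hXp
  obtain ⟨p, hp⟩ := hXp
  have hadj : Y.Adj (R.getVert h) (R.getVert (h-1)) := by
    have := R.adj_getVert_succ (i := h-1) (by omega)
    rw [Nat.sub_add_cancel (by omega)] at this
    exact this.symm
  obtain ⟨a', ha', p', hp'⟩ := transport swap p hadj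
  by_cases h1 : a' = R.getVert 1
  · -- reduce to a shorter pair via the inner walk
    have hend : (wdrop R 1).getVert (h-2) = R.getVert (h-1) := by
      rw [getVert_wdrop]; congr 1; omega
    have hW : ∃ q : Y.Walk a' (R.getVert (h-1)), q.length = h - 2 := by
      refine ⟨(wtake (wdrop R 1) (h-2)).copy h1.symm hend, ?_⟩
      rw [Walk.length_copy, length_wtake, length_wdrop]
      omega
    rcases hhodd with ⟨t, ht⟩
    exact ih (h-2) ⟨t-1, by omega⟩ (by omega) a' (R.getVert (h-1)) ⟨p', by omega⟩ hW
  by_cases hmem : a' ∈ R.support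
  · -- a cycle in Y, contradiction
    obtain ⟨j, hj, hjle⟩ := Walk.mem_support_iff_exists_getVert.mp hmem
    have hj0 : j ≠ 0 := by
      intro h0
      rw [h0, Walk.getVert_zero] at hj
      rw [← hj] at ha'
      exact Y.irrefl ha'
    have hj1 : j ≠ 1 := by
      intro h0; rw [h0] at hj; exact h1 hj.symm
    have hP1 : (wtake R j).IsPath := isPath_wtake hpath j
    have hC : (Walk.cons ha'.symm ((wtake R j).copy rfl hj)).IsCycle := by
      rw [Walk.cons_isCycle_iff]
      refine ⟨(Walk.isPath_copy _ _ _).mpr hP1, ?_⟩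
      intro hedge
      have := eq_getVert_one_of_mem_edges _ ((Walk.isPath_copy _ _ _).mpr hP1) a' hedge
      rw [Walk.getVert_copy, getVert_wtake R (by omega)] at this
      exact h1 this
    exact hYac _ hC
  · -- extend the path
    have hR' : (Walk.cons ha'.symm R).IsPath := by
      rw [Walk.cons_isPath_iff]; exact ⟨hpath, hmem⟩
    have hlen : (Walk.cons ha'.symm R).length < Fintype.card V := hR'.length_lt
    rw [Walk.length_cons] at hlen
    refine IH (Fintype.card V - (Walk.cons ha'.symm R).length) (by rw [Walk.length_cons]; omega)
      a' c (Walk.cons ha'.symm R) rfl hR' (by rw [Walk.length_cons]; omega) ?_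
    have hgv : (Walk.cons ha'.symm R).getVert h = R.getVert (h-1) := by
      conv_lhs => rw [show h = (h-1)+1 by omega, Walk.getVert_cons_succ]
    rw [hgv]
    exact ⟨p', by omega⟩


lemma adeA_acyclic (n : ℕ) : (adeA n).IsAcyclic := by
  apply acyclic_of_unique_smaller
  intro u₁ u₂ w h1 h2 hl1 hl2
  rw [adeA, fromRel_adj] at h1 h2
  apply Fin.ext
  rw [Fin.lt_iff_val_lt_val] at hl1 hl2
  have e1 := h1.2
  have e2 := h2.2
  omega

lemma adeD_acyclic {n : ℕ} (hn : 4 ≤ n) : (adeD n).IsAcyclic := by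
  apply acyclic_of_unique_smaller
  intro u₁ u₂ w h1 h2 hl1 hl2
  rw [adeD, fromRel_adj] at h1 h2
  apply Fin.ext
  rw [Fin.lt_iff_val_lt_val] at hl1 hl2
  have e1 := h1.2
  have e2 := h2.2
  omega

lemma adeE_acyclic {n : ℕ} (hn : 6 ≤ n) : (adeE n).IsAcyclic := by
  apply acyclic_of_unique_smaller
  intro u₁ u₂ w h1 h2 hl1 hl2
  rw [adeE, fromRel_adj] at h1 h2
  apply Fin.ext
  rw [Fin.lt_iff_val_lt_val] at hl1 hl2
  have e1 := h1.2
  have e2 := h2.2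
  omega




/-- Lift a walk whose support lies in `s` to the induced subgraph on `s`. -/
def liftW (s : Set V) : ∀ {x y : V} (w : G.Walk x y) (hw : ∀ z ∈ w.support, z ∈ s),
    (G.induce s).Walk ⟨x, hw x w.start_mem_support⟩ ⟨y, hw y w.end_mem_support⟩
  | _, _, Walk.nil, _ => Walk.nil
  | _, _, Walk.cons h p, hw =>
      Walk.cons (by exact h) (liftW s p (fun z hz => hw z (by simp [hz])))

lemma map_liftW (s : Set V) : ∀ {x y : V} (w : G.Walk x y) (hw : ∀ z ∈ w.support, z ∈ s),
    (liftW s w hw).map (Embedding.induce s).toHom = w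
  | _, _, Walk.nil, _ => rfl
  | _, _, Walk.cons h p, hw => by
      simp only [liftW]
      exact congrArg (Walk.cons h) (map_liftW s p _)

/-- An isomorphic copy of an acyclic graph is acyclic (one direction suffices). -/
lemma isAcyclic_of_iso {W W' : Type*} {A : SimpleGraph W} {B : SimpleGraph W'}
    (e : A ≃g B) (hB : B.IsAcyclic) : A.IsAcyclic := by
  intro v c hc
  exact hB _ ((Walk.map_isCycle_iff_of_injective (f := e.toHom) (by exact e.injective)).mpr hc)

lemma adeIsAcyclic {W : Type*} {A : SimpleGraph W} (h : IsADE A) : A.IsAcyclic := by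
  rcases h with ⟨n, _, ⟨e⟩⟩ | ⟨n, hn, ⟨e⟩⟩ | ⟨n, hn, ⟨e⟩⟩
  · exact isAcyclic_of_iso e (adeA_acyclic n)
  · exact isAcyclic_of_iso e (adeD_acyclic hn)
  · exact isAcyclic_of_iso e (adeE_acyclic (by omega))

lemma acyclic_of_components_ADE [DecidableEq V] (h : ∀ c : G.ConnectedComponent, IsADE (G.induce c.supp)) :
    G.IsAcyclic := by
  intro v c hc
  set s := (G.connectedComponentMk v).supp with hs
  have hsup : ∀ z ∈ c.support, z ∈ s := by
    intro z hz
    rw [hs, ConnectedComponent.mem_supp_iff]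
    exact ConnectedComponent.sound ⟨(c.takeUntil z hz).reverse⟩
  have hinj : Function.Injective ((Embedding.induce (G := G) s).toHom) :=
    (Embedding.induce (G := G) s).injective
  have hc' : ((liftW s c hsup).copy (Subtype.ext rfl) rfl).IsCycle := by
    rw [Walk.isCycle_copy]
    rw [← Walk.map_isCycle_iff_of_injective hinj, map_liftW]
    exact hc
  exact adeIsAcyclic (h _) _ hc'


lemma walk_parity {X : SimpleGraph V} {em : V → ZMod 2}
    (hbip : ∀ u v : V, X.Adj u v → em v = em u + 1) :
    ∀ {x y : V} (w : X.Walk x y), em y = em x + w.length := by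
  intro x y w
  induction w with
  | nil => simp
  | cons h q ih =>
      rw [ih, hbip _ _ h, Walk.length_cons]
      push_cast
      ring

lemma parity_eq {m n : ℕ} (h : (m : ZMod 2) = n) : m % 2 = n % 2 :=
  (ZMod.natCast_eq_natCast_iff m n 2).mp h

lemma adj_of_length_one {X : SimpleGraph V} {a b : V} (w : X.Walk a b)
    (h : w.length = 1) : X.Adj a b := by
  have h2 := w.adj_getVert_succ (i := 0) (by omega)
  rw [Walk.getVert_zero] at h2
  rwa [show w.getVert 1 = b by rw [← h, Walk.getVert_length]] at h2

lemma keyT [Fintype V] [DecidableEq V] {G D : SimpleGraph V}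
    (hGac : G.IsAcyclic) (hDac : D.IsAcyclic)
    (hdisj : ∀ u v : V, ¬(G.Adj u v ∧ D.Adj u v))
    (em : V → ZMod 2)
    (hGb : ∀ u v : V, G.Adj u v → em v = em u + 1)
    (hDb : ∀ u v : V, D.Adj u v → em v = em u + 1)
    (swapGD : ∀ a b : V, (∃ w, G.Adj a w ∧ D.Adj w b) → ∃ w, D.Adj a w ∧ G.Adj w b)
    (swapDG : ∀ a b : V, (∃ w, D.Adj a w ∧ G.Adj w b) → ∃ w, G.Adj a w ∧ D.Adj w b) :
    ∀ N g h : ℕ, g + h = N → Odd g → Odd h → ∀ a b : V,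
      (∃ p : G.Walk a b, p.length = g) → (∃ q : D.Walk a b, q.length = h) → False := by
  intro N
  induction N using Nat.strong_induction_on with
  | _ N IH =>
  rintro g h hN hg hh a b ⟨p, hp⟩ ⟨q, hq⟩
  have hqpath : q.bypass.IsPath := Walk.bypass_isPath q
  have hqlen : q.bypass.length ≤ h := hq ▸ Walk.length_bypass_le q
  have hqpar : q.bypass.length % 2 = 1 := by
    have h1 := walk_parity hDb q
    have h2 := walk_parity hDb q.bypass
    have h3 : ((q.length : ZMod 2)) = q.bypass.length := by
      have := h1.symm.trans h2
      exact (add_right_injective (em a)) this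
    have := parity_eq h3
    rcases hh with ⟨t, ht⟩
    omega
  rcases Nat.lt_or_ge q.bypass.length h with hlt | hge
  · exact IH (g + q.bypass.length) (by omega) g _ rfl hg (Nat.odd_iff.mpr hqpar) a b
      ⟨p, hp⟩ ⟨q.bypass, rfl⟩
  have hbe : q.bypass.length = h := le_antisymm hqlen hge
  by_cases hh1 : h = 1
  · -- D-adjacent; now look at the G-side
    have hDadj : D.Adj a b := adj_of_length_one q.bypass (by omega)
    have hppath : p.bypass.IsPath := Walk.bypass_isPath p
    have hplen : p.bypass.length ≤ g := hp ▸ Walk.length_bypass_le p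
    have hppar : p.bypass.length % 2 = 1 := by
      have h1 := walk_parity hGb p
      have h2 := walk_parity hGb p.bypass
      have h3 : ((p.length : ZMod 2)) = p.bypass.length := by
        have := h1.symm.trans h2
        exact (add_right_injective (em a)) this
      have := parity_eq h3
      rcases hg with ⟨t, ht⟩
      omega
    rcases Nat.lt_or_ge p.bypass.length g with hlt' | hge'
    · exact IH (p.bypass.length + h) (by omega) _ h rfl (Nat.odd_iff.mpr hppar) hh a b
        ⟨p.bypass, rfl⟩ ⟨q, hq⟩
    have hbe' : p.bypass.length = g := le_antisymm hplen hge'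
    by_cases hg1 : g = 1
    · exact hdisj a b ⟨adj_of_length_one p.bypass (by omega), hDadj⟩
    · -- chase in G
      have hg3 : 3 ≤ g := by rcases hg with ⟨t, ht⟩; omega
      have hgv : p.bypass.getVert g = b := by rw [← hbe', Walk.getVert_length]
      refine chase hGac swapDG 1 g hg3 hg
        (fun h' ho hlt a b ⟨qq, hqq⟩ ⟨pp, hpp⟩ =>
          IH (h' + 1) (by omega) h' 1 rfl ho odd_one a b ⟨pp, hpp⟩ ⟨qq, hqq⟩)
        (Fintype.card V - p.bypass.length) a b p.bypass rfl hppath (by omega) ?_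
      rw [hgv]
      exact ⟨Walk.cons hDadj Walk.nil, rfl⟩
  · -- chase in D
    have hh3 : 3 ≤ h := by rcases hh with ⟨t, ht⟩; omega
    have hgv : q.bypass.getVert h = b := by rw [← hbe, Walk.getVert_length]
    refine chase hDac swapGD g h hh3 hh
      (fun h' ho hlt a b hpp hqq =>
        IH (g + h') (by omega) g h' rfl hg ho a b hpp hqq)
      (Fintype.card V - q.bypass.length) a b q.bypass rfl hqpath (by omega) ?_
    rw [hgv]
    exact ⟨p, hp⟩


section cnt
variable {U : SimpleGraph V} (P : V → V → Prop) [DecidableRel P]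

def cnt : ∀ {x y : V}, U.Walk x y → ℕ
  | _, _, Walk.nil => 0
  | _, _, @Walk.cons _ _ u v _ _ p => (if P u v then 1 else 0) + cnt p

@[simp] lemma cnt_nil {x : V} : cnt P (Walk.nil : U.Walk x x) = 0 := rfl

@[simp] lemma cnt_cons {u v w : V} (h : U.Adj u v) (p : U.Walk v w) :
    cnt P (Walk.cons h p) = (if P u v then 1 else 0) + cnt P p := rfl

@[simp] lemma cnt_copy {u v u' v' : V} (p : U.Walk u v) (h1 : u = u') (h2 : v = v') :
    cnt P (p.copy h1 h2) = cnt P p := by subst h1; subst h2; rfl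

@[simp] lemma cnt_append : ∀ {u v w : V} (p : U.Walk u v) (q : U.Walk v w),
    cnt P (p.append q) = cnt P p + cnt P q
  | _, _, _, Walk.nil, q => by simp
  | _, _, _, Walk.cons h p, q => by
      simp only [Walk.cons_append, cnt_cons, cnt_append p q]
      omega

lemma cnt_reverseAux (hsymm : ∀ u v : V, P u v → P v u) :
    ∀ {u v w : V} (p : U.Walk u v) (q : U.Walk u w),
    cnt P (p.reverseAux q) = cnt P p + cnt P q
  | _, _, _, Walk.nil, q => by simp [Walk.reverseAux]
  | _, _, _, @Walk.cons _ _ u m _ h p, q => by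
      show cnt P (p.reverseAux (Walk.cons h.symm q)) = _
      rw [cnt_reverseAux hsymm p _, cnt_cons, cnt_cons]
      have : (if P m u then 1 else 0) = (if P u m then 1 else 0) := by
        by_cases hP : P u m
        · rw [if_pos hP, if_pos (hsymm _ _ hP)]
        · rw [if_neg hP, if_neg (fun hmu => hP (hsymm _ _ hmu))]
      omega

@[simp] lemma cnt_reverse (hsymm : ∀ u v : V, P u v → P v u) {u v : V} (p : U.Walk u v) :
    cnt P p.reverse = cnt P p := by
  have := cnt_reverseAux P hsymm p (Walk.nil : U.Walk u u)
  simpa [Walk.reverse] using this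

lemma cnt_length {u v : V} (p : U.Walk u v) : cnt P p ≤ p.length := by
  induction p with
  | nil => simp
  | cons h q ih =>
      rw [cnt_cons, Walk.length_cons]
      split <;> omega

end cnt

/-- Split a walk in `G ⊔ D` into a `G`-walk followed by a `D`-walk. -/
lemma separation {G D : SimpleGraph V} [DecidableRel G.Adj] [DecidableRel D.Adj]
    (hdisj : ∀ u v : V, ¬(G.Adj u v ∧ D.Adj u v))
    (swapGD : ∀ a b : V, (∃ w, G.Adj a w ∧ D.Adj w b) → ∃ w, D.Adj a w ∧ G.Adj w b) :
    ∀ {x y : V} (w : (G ⊔ D).Walk x y),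
      ∃ (z : V) (p : G.Walk x z) (q : D.Walk z y),
        p.length = cnt G.Adj w ∧ q.length = cnt D.Adj w := by
  intro x y w
  induction w with
  | nil => exact ⟨_, Walk.nil, Walk.nil, by simp, by simp⟩
  | @cons x m y h w' ih =>
      obtain ⟨z, p, q, hp, hq⟩ := ih
      rcases (sup_adj _ _ _ _).mp h with hG | hD
      · refine ⟨z, Walk.cons hG p, q, ?_, ?_⟩
        · rw [Walk.length_cons, cnt_cons, if_pos hG, hp]; omega
        · rw [cnt_cons, if_neg (fun hD => hdisj x m ⟨hG, hD⟩), hq]; omega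
      · -- transport the D-edge through the G-walk
        obtain ⟨z', hz', p'', hp''⟩ := transport swapGD p.reverse hD.symm
        refine ⟨z', p''.reverse, Walk.cons hz'.symm q, ?_, ?_⟩
        · rw [Walk.length_reverse, hp'', Walk.length_reverse, hp, cnt_cons,
            if_neg (fun hG => hdisj x m ⟨hG, hD⟩)]
          omega
        · rw [Walk.length_cons, cnt_cons, if_pos hD, hq]; omega

lemma cnt_total {G D : SimpleGraph V} [DecidableRel G.Adj] [DecidableRel D.Adj]
    (hdisj : ∀ u v : V, ¬(G.Adj u v ∧ D.Adj u v)) :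
    ∀ {x y : V} (w : (G ⊔ D).Walk x y), cnt G.Adj w + cnt D.Adj w = w.length := by
  intro x y w
  induction w with
  | nil => simp
  | @cons x m y h w' ih =>
      rw [cnt_cons, cnt_cons, Walk.length_cons, ← ih]
      rcases (sup_adj _ _ _ _).mp h with hG | hD
      · rw [if_pos hG, if_neg (fun hD => hdisj x m ⟨hG, hD⟩)]; omega
      · rw [if_pos hD, if_neg (fun hG => hdisj x m ⟨hG, hD⟩)]; omega


end ADE

/-- every admissible ADE bigraph admits a 2×2 vertex partition. -/
theorem admissibleADE_has_two_by_two_partition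
    {V : Type} [Fintype V] [DecidableEq V]
    (G D : SimpleGraph V) [DecidableRel G.Adj] [DecidableRel D.Adj]
    (hdisj : ∀ u v, ¬(G.Adj u v ∧ D.Adj u v))
    (eps : V → ℤ) (heps : ∀ v, eps v = 0 ∨ eps v = 1)
    (hGbip : ∀ u v, G.Adj u v → eps u ≠ eps v)
    (hDbip : ∀ u v, D.Adj u v → eps u ≠ eps v)
    (hcomm : G.adjMatrix ℕ * D.adjMatrix ℕ = D.adjMatrix ℕ * G.adjMatrix ℕ)
    (hGADE : ∀ c : G.ConnectedComponent, IsADE (G.induce c.supp))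
    (hDADE : ∀ c : D.ConnectedComponent, IsADE (D.induce c.supp)) :
    ∃ cG cD : V → Fin 2,
      (∀ u v, G.Adj u v → cG u ≠ cG v ∧ cD u = cD v) ∧
      (∀ u v, D.Adj u v → cG u = cG v ∧ cD u ≠ cD v) := by
  classical
  open ADE in
  set em : V → ZMod 2 := fun v => if eps v = 0 then 0 else 1 with hem
  have hb : ∀ (X : SimpleGraph V), (∀ u v, X.Adj u v → eps u ≠ eps v) →
      ∀ u v, X.Adj u v → em v = em u + 1 := by
    intro X hbip u v h
    rcases heps u with h0 | h0 <;> rcases heps v with h1 | h1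
    · exact absurd (h0.trans h1.symm) (hbip u v h)
    · simp [hem, h0, h1]
    · simp [hem, h0, h1]
      decide
    · exact absurd (h0.trans h1.symm) (hbip u v h)
  have hGb := hb G hGbip
  have hDb := hb D hDbip
  have hUb : ∀ u v, (G ⊔ D).Adj u v → em v = em u + 1 := by
    intro u v h
    rcases (SimpleGraph.sup_adj _ _ _ _).mp h with h | h
    exacts [hGb _ _ h, hDb _ _ h]
  -- the swap lemmas from commutation of adjacency matrices
  have entry : ∀ a b : V, (G.adjMatrix ℕ * D.adjMatrix ℕ) a b
      = (D.adjMatrix ℕ * G.adjMatrix ℕ) a b := fun a b => by rw [hcomm]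
  have swapgen : ∀ (X Y : SimpleGraph V) (_ : DecidableRel X.Adj) (_ : DecidableRel Y.Adj),
      (∀ a b : V, (X.adjMatrix ℕ * Y.adjMatrix ℕ) a b = (Y.adjMatrix ℕ * X.adjMatrix ℕ) a b) →
      ∀ a b : V, (∃ w, X.Adj a w ∧ Y.Adj w b) → ∃ w, Y.Adj a w ∧ X.Adj w b := by
    intro X Y _ _ hent a b ⟨w, hXw, hYw⟩
    have hL : (X.adjMatrix ℕ * Y.adjMatrix ℕ) a b ≠ 0 := by
      rw [SimpleGraph.adjMatrix_mul_apply]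
      intro hsum
      rw [Finset.sum_eq_zero_iff] at hsum
      have := hsum w ((SimpleGraph.mem_neighborFinset _ _ _).mpr hXw)
      rw [SimpleGraph.adjMatrix_apply, if_pos hYw] at this
      exact one_ne_zero this
    rw [hent a b, SimpleGraph.adjMatrix_mul_apply] at hL
    obtain ⟨u, hu, hne⟩ := Finset.exists_ne_zero_of_sum_ne_zero hL
    refine ⟨u, (SimpleGraph.mem_neighborFinset _ _ _).mp hu, ?_⟩
    by_contra hXu
    rw [SimpleGraph.adjMatrix_apply, if_neg hXu] at hne
    exact hne rfl
  have swapGD := swapgen G D ‹_› ‹_› entry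
  have swapDG := swapgen D G ‹_› ‹_› (fun a b => (entry a b).symm)
  -- acyclicity
  have hGac : G.IsAcyclic := ADE.acyclic_of_components_ADE hGADE
  have hDac : D.IsAcyclic := ADE.acyclic_of_components_ADE hDADE
  have T := ADE.keyT hGac hDac hdisj em hGb hDb swapGD swapDG
  -- parity of closed walks
  have closed : ∀ (x : V) (w : (G ⊔ D).Walk x x),
      ADE.cnt G.Adj w % 2 = 0 ∧ ADE.cnt D.Adj w % 2 = 0 := by
    intro x w
    have hlen : w.length % 2 = 0 := by
      have h1 := ADE.walk_parity hUb w
      have h2 : ((w.length : ℕ) : ZMod 2) = ((0 : ℕ) : ZMod 2) := by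
        have := left_eq_add.mp h1
        simpa using this
      simpa using ADE.parity_eq h2
    have htot := ADE.cnt_total hdisj w
    by_cases hodd : ADE.cnt G.Adj w % 2 = 0
    · exact ⟨hodd, by omega⟩
    · exfalso
      obtain ⟨z, p, q, hp, hq⟩ := ADE.separation hdisj swapGD w
      exact T (ADE.cnt G.Adj w + ADE.cnt D.Adj w) _ _ rfl
        (Nat.odd_iff.mpr (by omega)) (Nat.odd_iff.mpr (by omega)) x z
        ⟨p, hp⟩ ⟨q.reverse, by rw [SimpleGraph.Walk.length_reverse, hq]⟩
  -- any two walks between the same endpoints have the same edge-count parities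
  have wpar : ∀ (x y : V) (w₁ w₂ : (G ⊔ D).Walk x y),
      ADE.cnt G.Adj w₁ % 2 = ADE.cnt G.Adj w₂ % 2 ∧
      ADE.cnt D.Adj w₁ % 2 = ADE.cnt D.Adj w₂ % 2 := by
    intro x y w₁ w₂
    obtain ⟨hG0, hD0⟩ := closed x (w₁.append w₂.reverse)
    rw [ADE.cnt_append, ADE.cnt_reverse G.Adj (fun u v h => h.symm)] at hG0
    rw [ADE.cnt_append, ADE.cnt_reverse D.Adj (fun u v h => h.symm)] at hD0
    exact ⟨by omega, by omega⟩
  -- representative walks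
  have hre : ∀ v : V, (G ⊔ D).Reachable (((G ⊔ D).connectedComponentMk v).out) v := by
    intro v
    exact SimpleGraph.ConnectedComponent.exact (Quot.out_eq _)
  have wof : ∀ v : V, (G ⊔ D).Walk (((G ⊔ D).connectedComponentMk v).out) v :=
    fun v => (hre v).some
  refine ⟨fun v => ⟨ADE.cnt G.Adj (wof v) % 2, Nat.mod_lt _ (by norm_num)⟩,
          fun v => ⟨ADE.cnt D.Adj (wof v) % 2, Nat.mod_lt _ (by norm_num)⟩, ?_, ?_⟩
  · intro u v h
    have hU : (G ⊔ D).Adj u v := (SimpleGraph.sup_adj _ _ _ _).mpr (Or.inl h)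
    have hcomp : (G ⊔ D).connectedComponentMk u = (G ⊔ D).connectedComponentMk v :=
      SimpleGraph.ConnectedComponent.sound hU.reachable
    have hout : ((G ⊔ D).connectedComponentMk u).out = ((G ⊔ D).connectedComponentMk v).out := by
      rw [hcomp]
    obtain ⟨hGp, hDp⟩ := wpar _ _
      (((wof u).append (SimpleGraph.Walk.cons hU SimpleGraph.Walk.nil)).copy hout rfl) (wof v)
    rw [ADE.cnt_copy, ADE.cnt_append, ADE.cnt_cons, ADE.cnt_nil, if_pos h] at hGp
    rw [ADE.cnt_copy, ADE.cnt_append, ADE.cnt_cons, ADE.cnt_nil,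
      if_neg (fun hD => hdisj u v ⟨h, hD⟩)] at hDp
    constructor
    · intro heq
      rw [Fin.mk.injEq] at heq
      omega
    · rw [Fin.mk.injEq]
      omega
  · intro u v h
    have hU : (G ⊔ D).Adj u v := (SimpleGraph.sup_adj _ _ _ _).mpr (Or.inr h)
    have hcomp : (G ⊔ D).connectedComponentMk u = (G ⊔ D).connectedComponentMk v :=
      SimpleGraph.ConnectedComponent.sound hU.reachable
    have hout : ((G ⊔ D).connectedComponentMk u).out = ((G ⊔ D).connectedComponentMk v).out := by
      rw [hcomp]
    obtain ⟨hGp, hDp⟩ := wpar _ _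
      (((wof u).append (SimpleGraph.Walk.cons hU SimpleGraph.Walk.nil)).copy hout rfl) (wof v)
    rw [ADE.cnt_copy, ADE.cnt_append, ADE.cnt_cons, ADE.cnt_nil,
      if_neg (fun hG => hdisj u v ⟨hG, h⟩)] at hGp
    rw [ADE.cnt_copy, ADE.cnt_append, ADE.cnt_cons, ADE.cnt_nil, if_pos h] at hDp
    constructor
    · rw [Fin.mk.injEq]
      omega
    · intro heq
      rw [Fin.mk.injEq] at heq
      omega
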